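/- Let K be a totally real number field, L a totally imaginary quadratic extension of K with nontrivial K-automorphism σ, and let (V,H) and (V',H') be L/K-Hermitian spaces of L-dimension n. Regard V as a 2n-dimensional K-vector space V_K and define the quadratic form Q_H : V_K → K by Q_H(v) = H(v,v) (which lies in K since it is fixed by σ), and similarly Q_{H'}. Then: (1) (V,H) and (V',H') are isometric as Hermitian spaces if and only if (V_K, Q_H) and (V'_K, Q_{H'}) are isometric as quadratic spaces over K; (2) if L = K(√δ) for δ ∈ K^×, then the discriminant of Q_H, i.e. the class of (−1)^n·det(Gram matrix of the polar bilinear form of Q_H with respect to a K-basis of V_K) in K^×/(K^×)², equals the class of δ^n. -/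

import Mathlib

section Herm

variable {K L : Type} [Field K] [Field L] [Algebra K L]

structure HermData (σ : L ≃ₐ[K] L) {V : Type} [AddCommGroup V] [Module L V]
    (H : V → V → L) : Prop where
  addl : ∀ v w u : V, H (v + w) u = H v u + H w u
  smull : ∀ (a : L) (v w : V), H (a • v) w = a * H v w
  herm : ∀ v w : V, H v w = σ (H w v)
  nd : ∀ v : V, (∀ w : V, H v w = 0) → v = 0

variable {σ : L ≃ₐ[K] L} {V : Type} [AddCommGroup V] [Module L V] {H : V → V → L}

namespace HermData

theorem addr (hd : HermData σ H) (u v w : V) : H u (v + w) = H u v + H u w := by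
  rw [hd.herm u (v + w), hd.addl, map_add, ← hd.herm, ← hd.herm]

theorem smulr (hd : HermData σ H) (a : L) (v w : V) : H v (a • w) = σ a * H v w := by
  rw [hd.herm v (a • w), hd.smull, map_mul, ← hd.herm]

theorem zerol (hd : HermData σ H) (w : V) : H 0 w = 0 := by
  have := hd.smull 0 w w; rwa [zero_smul, zero_mul] at this

theorem zeror (hd : HermData σ H) (w : V) : H w 0 = 0 := by
  rw [hd.herm, hd.zerol, map_zero]

theorem negl (hd : HermData σ H) (v w : V) : H (-v) w = - H v w := by
  rw [← neg_one_smul L v, hd.smull]; ring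

theorem subl (hd : HermData σ H) (u v w : V) : H (u - v) w = H u w - H v w := by
  rw [sub_eq_add_neg, hd.addl, hd.negl]; ring

theorem subr (hd : HermData σ H) (u v w : V) : H u (v - w) = H u v - H u w := by
  rw [hd.herm u (v - w), hd.subl, map_sub, ← hd.herm, ← hd.herm]

theorem diag_fixed (hd : HermData σ H) (v : V) : σ (H v v) = H v v := (hd.herm v v).symm

end HermData

/-- The trace bilinear form associated to `H`. -/
def bf (H : V → V → L) (x y : V) : L := H x y + H y x

theorem bf_symm (hd : HermData σ H) (x y : V) : bf H x y = bf H y x := add_comm _ _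

theorem bf_fixed (hd : HermData σ H) (x y : V) : σ (bf H x y) = bf H x y := by
  unfold bf
  rw [map_add, ← hd.herm y x, ← hd.herm x y, add_comm]

theorem bf_addl (hd : HermData σ H) (x x' y : V) :
    bf H (x + x') y = bf H x y + bf H x' y := by
  unfold bf; rw [hd.addl, hd.addr]; ring

theorem bf_addr (hd : HermData σ H) (x y y' : V) :
    bf H x (y + y') = bf H x y + bf H x y' := by
  unfold bf; rw [hd.addl, hd.addr]; ring

theorem bf_subl (hd : HermData σ H) (x x' y : V) :
    bf H (x - x') y = bf H x y - bf H x' y := by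
  unfold bf; rw [hd.subl, hd.subr]; ring

theorem bf_subr (hd : HermData σ H) (x y y' : V) :
    bf H x (y - y') = bf H x y - bf H x y' := by
  unfold bf; rw [hd.subl, hd.subr]; ring

theorem bf_smul_fixedl (hd : HermData σ H) {c : L} (hc : σ c = c) (x y : V) :
    bf H (c • x) y = c * bf H x y := by
  unfold bf; rw [hd.smull, hd.smulr, hc]; ring

theorem bf_smul_fixedr (hd : HermData σ H) {c : L} (hc : σ c = c) (x y : V) :
    bf H x (c • y) = c * bf H x y := by
  unfold bf; rw [hd.smull, hd.smulr, hc]; ring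

theorem bf_self (hd : HermData σ H) (x : V) : bf H x x = 2 * H x x := by
  unfold bf; ring

theorem bf_polar (hd : HermData σ H) (x y : V) :
    bf H x y = H (x + y) (x + y) - H x x - H y y := by
  rw [hd.addl, hd.addr, hd.addr]; unfold bf; ring

variable [Module K V] [IsScalarTower K L V]

theorem HermData.ksmull (hd : HermData σ H) (k : K) (v w : V) :
    H (k • v) w = algebraMap K L k * H v w := by
  rw [← algebraMap_smul L k v, hd.smull]

theorem HermData.ksmulr (hd : HermData σ H) (k : K) (v w : V) :
    H v (k • w) = algebraMap K L k * H v w := by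
  rw [← algebraMap_smul L k w, hd.smulr, AlgEquiv.commutes]

theorem bf_ksmull (hd : HermData σ H) (k : K) (x y : V) :
    bf H (k • x) y = algebraMap K L k * bf H x y := by
  rw [← algebraMap_smul L k x, bf_smul_fixedl hd (σ.commutes k) x y]

/-- Reflection coefficient. -/
noncomputable def rcoef (H : V → V → L) (d x : V) : L := 2 * bf H x d / bf H d d

theorem rcoef_fixed (hd : HermData σ H) (d x : V) : σ (rcoef H d x) = rcoef H d x := by
  unfold rcoef
  rw [map_div₀, map_mul, map_ofNat, bf_fixed hd, bf_fixed hd]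

theorem bf_expand (hd : HermData σ H) (x y d : V) {cx cy : L} (hcx : σ cx = cx)
    (hcy : σ cy = cy) :
    bf H (x - cx • d) (y - cy • d) =
      bf H x y - cy * bf H x d - cx * bf H d y + cx * cy * bf H d d := by
  simp only [bf_subl hd, bf_subr hd, bf_smul_fixedl hd hcx, bf_smul_fixedr hd hcy]
  ring

/-- Reflection in `d` as a `K`-linear map. -/
noncomputable def reflMap (hd : HermData σ H) (d : V) : V →ₗ[K] V where
  toFun x := x - rcoef H d x • d
  map_add' x y := by
    have h : rcoef H d (x + y) = rcoef H d x + rcoef H d y := by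
      unfold rcoef; rw [bf_addl hd]; ring
    show (x + y) - rcoef H d (x + y) • d =
      (x - rcoef H d x • d) + (y - rcoef H d y • d)
    rw [h, add_smul]; abel
  map_smul' k x := by
    have h : rcoef H d (k • x) = algebraMap K L k * rcoef H d x := by
      unfold rcoef; rw [bf_ksmull hd]; ring
    show (k • x) - rcoef H d (k • x) • d = k • (x - rcoef H d x • d)
    rw [h, mul_smul, algebraMap_smul, ← smul_sub]

theorem reflMap_apply (hd : HermData σ H) (d x : V) :
    reflMap hd d x = x - rcoef H d x • d := rfl

theorem reflMap_involutive (hd : HermData σ H) (d : V) :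
    Function.Involutive (reflMap hd d) := by
  intro x
  by_cases h0 : bf H d d = 0
  · simp [reflMap, rcoef, h0, div_zero]
  · have hfix : σ (rcoef H d x) = rcoef H d x := rcoef_fixed hd d x
    have e1 : bf H (x - rcoef H d x • d) d = bf H x d - rcoef H d x * bf H d d := by
      rw [bf_subl hd, bf_smul_fixedl hd hfix]
    have h1 : rcoef H d (reflMap hd d x) = - rcoef H d x := by
      rw [reflMap_apply]
      show 2 * bf H (x - rcoef H d x • d) d / bf H d d = - rcoef H d x
      rw [e1]
      unfold rcoef
      field_simp
      ring
    rw [reflMap_apply hd d (reflMap hd d x), h1, reflMap_apply]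
    module

theorem reflMap_preserves (hd : HermData σ H) {d : V} (h0 : bf H d d ≠ 0) (x y : V) :
    bf H (reflMap hd d x) (reflMap hd d y) = bf H x y := by
  rw [reflMap_apply, reflMap_apply,
    bf_expand hd x y d (rcoef_fixed hd d x) (rcoef_fixed hd d y), bf_symm hd d y]
  unfold rcoef
  field_simp
  ring

theorem reflMap_fixes (hd : HermData σ H) (d x : V) (hx : bf H x d = 0) :
    reflMap hd d x = x := by
  simp [reflMap, rcoef, hx]

/-- Reflection in `d` as a `K`-linear equivalence. -/
noncomputable def reflE (hd : HermData σ H) (d : V) : V ≃ₗ[K] V :=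
  LinearEquiv.ofInvolutive (reflMap hd d) (reflMap_involutive hd d)

theorem reflE_apply (hd : HermData σ H) (d x : V) :
    reflE hd d x = x - rcoef H d x • d := rfl

omit [Module K V] [IsScalarTower K L V] in
theorem bf_zerol (hd : HermData σ H) (y : V) : bf H 0 y = 0 := by
  unfold bf; rw [hd.zerol, hd.zeror, add_zero]

omit [Module K V] [IsScalarTower K L V] in
theorem bf_negl (hd : HermData σ H) (x y : V) : bf H (-x) y = - bf H x y := by
  have : bf H (0 - x) y = bf H 0 y - bf H x y := bf_subl hd 0 x y
  rw [zero_sub, bf_zerol hd, zero_sub] at this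
  exact this

omit [Module K V] [IsScalarTower K L V] in
theorem exists_anisotropic (hd : HermData σ H) {s : L} (hσs : σ s = -s) (hs0 : s ≠ 0)
    (h2 : (2 : L) ≠ 0) [Nontrivial V] : ∃ v : V, H v v ≠ 0 := by
  by_contra hall
  push_neg at hall
  have alt : ∀ v w : V, H v w + H w v = 0 := by
    intro v w
    have e := bf_polar hd v w
    rw [hall, hall, hall] at e
    simpa [bf] using e
  have key : ∀ v w : V, H v w = 0 := by
    intro v w
    have h1 := alt v w
    have h2' := alt (s • v) w
    rw [hd.smull, hd.smulr, hσs] at h2'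
    have hh : s * (2 * H v w) = 0 := by linear_combination h2' + s * h1
    have h3 := (mul_eq_zero.mp hh).resolve_left hs0
    exact (mul_eq_zero.mp h3).resolve_left h2
  obtain ⟨x, y, hxy⟩ := exists_pair_ne V
  exact hxy (by rw [hd.nd x (key x), hd.nd y (key y)])

omit [Module K V] [IsScalarTower K L V] in
/-- The `H`-orthogonal complement of a vector. -/
def ocomp (hd : HermData σ H) (v : V) : Submodule L V where
  carrier := {w | H w v = 0}
  add_mem' := by
    intro a b ha hb
    simp only [Set.mem_setOf_eq] at *
    rw [hd.addl, ha, hb, add_zero]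
  zero_mem' := hd.zerol v
  smul_mem' := by
    intro a w hw
    simp only [Set.mem_setOf_eq] at *
    rw [hd.smull, hw, mul_zero]

omit [Module K V] [IsScalarTower K L V] in
theorem mem_ocomp (hd : HermData σ H) (v w : V) : w ∈ ocomp hd v ↔ H w v = 0 := Iff.rfl

omit [Module K V] [IsScalarTower K L V] in
theorem proj_mem (hd : HermData σ H) {v : V} (hv : H v v ≠ 0) (x : V) :
    x - (H x v / H v v) • v ∈ ocomp hd v := by
  show H _ v = 0
  rw [hd.subl, hd.smull, div_mul_cancel₀ _ hv, sub_self]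

omit [Module K V] [IsScalarTower K L V] in
theorem isCompl_ocomp (hd : HermData σ H) {v : V} (hv : H v v ≠ 0) :
    IsCompl (L ∙ v) (ocomp hd v) := by
  constructor
  · rw [disjoint_iff_inf_le]
    rintro x ⟨hx1, hx2⟩
    obtain ⟨c, rfl⟩ := Submodule.mem_span_singleton.mp hx1
    have h := (mem_ocomp hd v _).mp hx2
    rw [hd.smull] at h
    rcases mul_eq_zero.mp h with h | h
    · simp [h]
    · exact absurd h hv
  · rw [codisjoint_iff, eq_top_iff]
    rintro x -
    have h1 : (H x v / H v v) • v ∈ L ∙ v :=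
      Submodule.smul_mem _ _ (Submodule.mem_span_singleton_self v)
    have h2 := Submodule.add_mem_sup h1 (proj_mem hd hv x)
    simpa using h2

omit [Module K V] [IsScalarTower K L V] in
theorem finrank_ocomp (hd : HermData σ H) {v : V} (hv : H v v ≠ 0) [FiniteDimensional L V] :
    Module.finrank L (ocomp hd v) + 1 = Module.finrank L V := by
  have hv0 : v ≠ 0 := fun h => hv (by rw [h, hd.zerol])
  have h := Submodule.finrank_add_eq_of_isCompl (isCompl_ocomp hd hv)
  rw [finrank_span_singleton hv0] at h
  omega

omit [Module K V] [IsScalarTower K L V] in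
theorem hermData_ocomp (hd : HermData σ H) {v : V} (hv : H v v ≠ 0) :
    HermData σ (fun a b : ocomp hd v => H a b) where
  addl a b c := by
    show H (↑(a + b)) _ = _
    rw [Submodule.coe_add, hd.addl]
  smull a b c := by
    show H (↑(a • b)) _ = _
    rw [Submodule.coe_smul, hd.smull]
  herm a b := hd.herm _ _
  nd := by
    intro w hw
    have hall : ∀ x : V, H (↑w) x = 0 := by
      intro x
      have hx : x = (H x v / H v v) • v +
          ↑(⟨x - (H x v / H v v) • v, proj_mem hd hv x⟩ : ocomp hd v) := by
        simp
      rw [hx, hd.addr, hd.smulr]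
      have hwv : H (↑w) v = 0 := w.2
      rw [hwv, mul_zero, zero_add]
      exact hw ⟨x - (H x v / H v v) • v, proj_mem hd hv x⟩
    exact Subtype.ext (hd.nd _ hall)

theorem conj_exists (hd : HermData σ H) (h2 : (2 : L) ≠ 0) (u y z : V)
    (hyz : bf H y y = bf H z z) (hyu : bf H y u = 0) (hzu : bf H z u = 0)
    (hz : bf H z z ≠ 0) :
    ∃ e : V ≃ₗ[K] V, (∀ x x', bf H (e x) (e x') = bf H x x') ∧ e y = z ∧ e u = u := by
  have hsum : bf H (y - z) (y - z) + bf H (y + z) (y + z) = 4 * bf H z z := by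
    simp only [bf_addl hd, bf_addr hd, bf_subl hd, bf_subr hd]
    linear_combination 2 * hyz
  have h4 : (4 : L) ≠ 0 := by
    rw [show (4 : L) = 2 * 2 by norm_num]
    exact mul_ne_zero h2 h2
  by_cases hdd : bf H (y - z) (y - z) = 0
  · -- use double reflection
    have hpp : bf H (y + z) (y + z) ≠ 0 := by
      intro h
      rw [hdd, h, zero_add] at hsum
      exact hz (by
        rcases mul_eq_zero.mp hsum.symm with h' | h'
        · exact absurd h' h4
        · exact h')
    have hA : bf H (y + z) (y + z) = 2 * (bf H y y + bf H y z) := by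
      simp only [bf_addl hd, bf_addr hd]
      rw [bf_symm hd z y, hyz]; ring
    have hr1 : rcoef H (y + z) y = 1 := by
      unfold rcoef
      rw [bf_addr hd, hA]
      have : bf H y y + bf H y z ≠ 0 := by
        intro h; rw [hA, h, mul_zero] at hpp; exact hpp rfl
      field_simp
    have hstep1 : reflMap hd (y + z) y = -z := by
      rw [reflMap_apply, hr1, one_smul]; abel
    have hbnz : bf H (-z) z = - bf H z z := bf_negl hd z z
    have hr2 : rcoef H z (-z) = -2 := by
      unfold rcoef
      rw [hbnz]
      field_simp
    have hstep2 : reflMap hd z (-z) = z := by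
      rw [reflMap_apply, hr2]
      module
    refine ⟨(reflE hd (y + z)).trans (reflE hd z), ?_, ?_, ?_⟩
    · intro x x'
      show bf H (reflMap hd z (reflMap hd (y + z) x)) (reflMap hd z (reflMap hd (y + z) x')) = _
      rw [reflMap_preserves hd hz, reflMap_preserves hd hpp]
    · show reflMap hd z (reflMap hd (y + z) y) = z
      rw [hstep1, hstep2]
    · show reflMap hd z (reflMap hd (y + z) u) = u
      have hu1 : bf H u (y + z) = 0 := by
        rw [bf_addr hd, bf_symm hd u y, bf_symm hd u z, hyu, hzu, add_zero]
      have hu2 : bf H u z = 0 := by rw [bf_symm hd u z, hzu]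
      rw [reflMap_fixes hd _ u hu1, reflMap_fixes hd _ u hu2]
  · -- single reflection in y - z
    have hA : bf H (y - z) (y - z) = 2 * (bf H y y - bf H y z) := by
      simp only [bf_subl hd, bf_subr hd]
      rw [bf_symm hd z y, hyz]; ring
    have hr1 : rcoef H (y - z) y = 1 := by
      unfold rcoef
      rw [bf_subr hd, hA]
      have : bf H y y - bf H y z ≠ 0 := by
        intro h; rw [hA, h, mul_zero] at hdd; exact hdd rfl
      field_simp
    refine ⟨reflE hd (y - z), fun x x' => reflMap_preserves hd hdd x x', ?_, ?_⟩
    · show reflMap hd (y - z) y = z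
      rw [reflMap_apply, hr1, one_smul]; abel
    · exact reflMap_fixes hd _ u (by rw [bf_subr hd, bf_symm hd u y, bf_symm hd u z, hyu, hzu, sub_zero])

omit [Module K V] [IsScalarTower K L V] in
theorem herm_decomp (hd : HermData σ H) {v : V} (hv : H v v ≠ 0) (x y : V) :
    H x y = (H x v / H v v) * σ (H y v / H v v) * H v v +
      H (x - (H x v / H v v) • v) (y - (H y v / H v v) • v) := by
  have h1 : σ (H y v) = H v y := (hd.herm v y).symm
  have h2 : σ (H v v) = H v v := hd.diag_fixed v
  simp only [hd.subl, hd.subr, hd.smull, hd.smulr]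
  rw [map_div₀, h1, h2]
  have h3 : H v y * (H x v / H v v) = H x v * (H v y / H v v) := by ring
  field_simp
  ring

omit [Module K V] [IsScalarTower K L V] in
theorem mem_ocomp_iff_bf (hd : HermData σ H) {s : L} (hσs : σ s = -s) (hs0 : s ≠ 0)
    (h2 : (2 : L) ≠ 0) (v w : V) :
    w ∈ ocomp hd v ↔ (bf H w v = 0 ∧ bf H w (s • v) = 0) := by
  constructor
  · intro hw
    have h0 : H w v = 0 := hw
    have h0' : H v w = 0 := by rw [hd.herm v w, h0, map_zero]
    constructor
    · unfold bf; rw [h0, h0', add_zero]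
    · unfold bf; rw [hd.smulr, hd.smull, hσs, h0, h0']; ring
  · rintro ⟨h1, h2'⟩
    unfold bf at h1 h2'
    rw [hd.smulr, hd.smull, hσs] at h2'
    show H w v = 0
    have hh : s * (2 * H w v) = 0 := by linear_combination s * h1 - h2'
    have h3 := (mul_eq_zero.mp hh).resolve_left hs0
    exact (mul_eq_zero.mp h3).resolve_left h2

omit [Module K V] [IsScalarTower K L V] in
theorem glue {V' : Type} [AddCommGroup V'] [Module L V'] {H' : V' → V' → L}
    (hd : HermData σ H) (hd' : HermData σ H') {v : V} (hv : H v v ≠ 0) {u : V'}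
    (hu : H' u u = H v v)
    (f₀ : (ocomp hd v) ≃ₗ[L] (ocomp hd' u))
    (hf₀ : ∀ w w' : ocomp hd v, H' ↑(f₀ w) ↑(f₀ w') = H ↑w ↑w') :
    ∃ f : V ≃ₗ[L] V', ∀ x y : V, H' (f x) (f y) = H x y := by
  have hu0 : H' u u ≠ 0 := hu ▸ hv
  let P : V → ocomp hd v := fun x => ⟨x - (H x v / H v v) • v, proj_mem hd hv x⟩
  let P' : V' → ocomp hd' u := fun x => ⟨x - (H' x u / H' u u) • u, proj_mem hd' hu0 x⟩
  let F : V → V' := fun x => (H x v / H v v) • u + ↑(f₀ (P x))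
  let F' : V' → V := fun x => (H' x u / H' u u) • v + ↑(f₀.symm (P' x))
  have hF_c : ∀ x : V, H' (F x) u = (H x v / H v v) * H' u u := by
    intro x
    show H' ((H x v / H v v) • u + ↑(f₀ (P x))) u = _
    rw [hd'.addl, hd'.smull, (f₀ (P x)).2, add_zero]
  have hPF : ∀ x : V, P' (F x) = f₀ (P x) := by
    intro x
    apply Subtype.ext
    show F x - (H' (F x) u / H' u u) • u = ↑(f₀ (P x))
    rw [hF_c, mul_div_assoc, div_self hu0, mul_one]
    show ((H x v / H v v) • u + ↑(f₀ (P x))) - (H x v / H v v) • u = _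
    abel
  have hF'_c : ∀ x : V', H (F' x) v = (H' x u / H' u u) * H v v := by
    intro x
    show H ((H' x u / H' u u) • v + ↑(f₀.symm (P' x))) v = _
    rw [hd.addl, hd.smull, (f₀.symm (P' x)).2, add_zero]
  have hPF' : ∀ x : V', P (F' x) = f₀.symm (P' x) := by
    intro x
    apply Subtype.ext
    show F' x - (H (F' x) v / H v v) • v = ↑(f₀.symm (P' x))
    rw [hF'_c, mul_div_assoc, div_self hv, mul_one]
    show ((H' x u / H' u u) • v + ↑(f₀.symm (P' x))) - (H' x u / H' u u) • v = _
    abel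
  have hleft : ∀ x : V, F' (F x) = x := by
    intro x
    show (H' (F x) u / H' u u) • v + ↑(f₀.symm (P' (F x))) = x
    rw [hF_c, mul_div_assoc, div_self hu0, mul_one, hPF, f₀.symm_apply_apply]
    show (H x v / H v v) • v + (x - (H x v / H v v) • v) = x
    abel
  have hright : ∀ x : V', F (F' x) = x := by
    intro x
    show (H (F' x) v / H v v) • u + ↑(f₀ (P (F' x))) = x
    rw [hF'_c, mul_div_assoc, div_self hv, mul_one, hPF', f₀.apply_symm_apply]
    show (H' x u / H' u u) • u + (x - (H' x u / H' u u) • u) = x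
    abel
  have hadd : ∀ x y, F (x + y) = F x + F y := by
    intro x y
    have hP : P (x + y) = P x + P y := by
      apply Subtype.ext
      show (x + y) - (H (x + y) v / H v v) • v =
        (x - (H x v / H v v) • v) + (y - (H y v / H v v) • v)
      rw [hd.addl, add_div, add_smul]; abel
    show (H (x + y) v / H v v) • u + ↑(f₀ (P (x + y))) = _
    rw [hd.addl, add_div, hP, map_add, Submodule.coe_add, add_smul]
    show _ = ((H x v / H v v) • u + ↑(f₀ (P x))) + ((H y v / H v v) • u + ↑(f₀ (P y)))
    abel
  have hsmul : ∀ (a : L) (x : V), F (a • x) = a • F x := by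
    intro a x
    have hP : P (a • x) = a • P x := by
      apply Subtype.ext
      show a • x - (H (a • x) v / H v v) • v = a • (x - (H x v / H v v) • v)
      rw [hd.smull, mul_div_assoc, mul_smul, ← smul_sub]
    show (H (a • x) v / H v v) • u + ↑(f₀ (P (a • x))) =
      a • ((H x v / H v v) • u + ↑(f₀ (P x)))
    rw [hd.smull, mul_div_assoc, hP, map_smul, Submodule.coe_smul, mul_smul, smul_add]
  refine ⟨{ toFun := F, map_add' := hadd, map_smul' := hsmul, invFun := F',
            left_inv := hleft, right_inv := hright }, ?_⟩
  intro x y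
  show H' (F x) (F y) = H x y
  have e1 : H' ↑(f₀ (P x)) u = 0 := (f₀ (P x)).2
  have e3 : H' u ↑(f₀ (P y)) = 0 := by rw [hd'.herm, (f₀ (P y)).2, map_zero]
  have expand : H' (F x) (F y) =
      (H x v / H v v) * σ (H y v / H v v) * H' u u + H' ↑(f₀ (P x)) ↑(f₀ (P y)) := by
    show H' ((H x v / H v v) • u + ↑(f₀ (P x))) ((H y v / H v v) • u + ↑(f₀ (P y))) = _
    simp only [hd'.addl, hd'.addr, hd'.smull, hd'.smulr]
    rw [e1, e3]
    ring
  rw [expand, hf₀, hu, herm_decomp hd hv x y]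

set_option maxHeartbeats 1000000 in
theorem jacobson {s : L} (hσs : σ s = -s) (hs0 : s ≠ 0) (h2 : (2 : L) ≠ 0) :
    ∀ (n : ℕ) (V₁ V₂ : Type) [AddCommGroup V₁] [Module L V₁] [Module K V₁]
      [IsScalarTower K L V₁] [FiniteDimensional L V₁]
      [AddCommGroup V₂] [Module L V₂] [Module K V₂]
      [IsScalarTower K L V₂] [FiniteDimensional L V₂]
      (H₁ : V₁ → V₁ → L) (H₂ : V₂ → V₂ → L)
      (hd₁ : HermData σ H₁) (hd₂ : HermData σ H₂),
      Module.finrank L V₁ = n → Module.finrank L V₂ = n →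
      ∀ g : V₁ ≃ₗ[K] V₂, (∀ x, H₂ (g x) (g x) = H₁ x x) →
      ∃ f : V₁ ≃ₗ[L] V₂, ∀ x y, H₂ (f x) (f y) = H₁ x y := by
  intro n
  induction n with
  | zero =>
    intro V₁ V₂ _ _ _ _ _ _ _ _ _ _ H₁ H₂ hd₁ hd₂ h0 h0' g hg
    have hs1 : Subsingleton V₁ := (Module.finrank_zero_iff (R := L)).mp h0
    have hs2 : Subsingleton V₂ := (Module.finrank_zero_iff (R := L)).mp h0'
    refine ⟨{ toFun := fun _ => 0, map_add' := fun _ _ => (add_zero 0).symm,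
              map_smul' := fun a _ => (smul_zero a).symm, invFun := fun _ => 0,
              left_inv := fun x => Subsingleton.elim _ _,
              right_inv := fun x => Subsingleton.elim _ _ }, ?_⟩
    intro x y
    show H₂ 0 0 = H₁ x y
    rw [hd₂.zerol, Subsingleton.elim x 0, hd₁.zerol]
  | succ n IH =>
    intro V₁ V₂ _ _ _ _ _ _ _ _ _ _ H₁ H₂ hd₁ hd₂ h0 h0' g hg
    have : Nontrivial V₁ := (Module.finrank_pos_iff (R := L)).mp (by rw [h0]; exact n.succ_pos)
    obtain ⟨v, hv⟩ := exists_anisotropic hd₁ hσs hs0 h2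
    have hgbf : ∀ x x', bf H₂ (g x) (g x') = bf H₁ x x' := by
      intro x x'
      rw [bf_polar hd₂, bf_polar hd₁, ← map_add g, hg, hg, hg]
    have huu : H₂ (g v) (g v) = H₁ v v := hg v
    have hu : H₂ (g v) (g v) ≠ 0 := by rw [huu]; exact hv
    have hyz : bf H₂ (g (s • v)) (g (s • v)) = bf H₂ (s • g v) (s • g v) := by
      rw [hgbf, bf_self hd₁, bf_self hd₂, hd₁.smull, hd₁.smulr, hd₂.smull, hd₂.smulr, huu]
    have hyu : bf H₂ (g (s • v)) (g v) = 0 := by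
      rw [hgbf]
      unfold bf
      rw [hd₁.smull, hd₁.smulr, hσs]
      have hfix : σ (H₁ v v) = H₁ v v := hd₁.diag_fixed v
      ring
    have hzu : bf H₂ (s • g v) (g v) = 0 := by
      unfold bf
      rw [hd₂.smull, hd₂.smulr, hσs]
      ring
    have hzz : bf H₂ (s • g v) (s • g v) ≠ 0 := by
      rw [bf_self hd₂, hd₂.smull, hd₂.smulr, hσs]
      exact mul_ne_zero h2 (mul_ne_zero hs0 (mul_ne_zero (neg_ne_zero.mpr hs0) hu))
    obtain ⟨e, he, hey, heu⟩ :=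
      conj_exists hd₂ h2 (g v) (g (s • v)) (s • g v) hyz hyu hzu hzz
    set G : V₁ ≃ₗ[K] V₂ := g.trans e with hGdef
    have hGbf : ∀ x x', bf H₂ (G x) (G x') = bf H₁ x x' := fun x x' => by
      show bf H₂ (e (g x)) (e (g x')) = _
      rw [he, hgbf]
    have hGv : G v = g v := heu
    have hGsv : G (s • v) = s • g v := hey
    have hGh : ∀ x, H₂ (G x) (G x) = H₁ x x := by
      intro x
      have hb := hGbf x x
      rw [bf_self hd₂, bf_self hd₁] at hb
      exact mul_left_cancel₀ h2 hb
    have hvu : H₂ (G v) (G v) = H₁ v v := hGh v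
    have hu' : H₂ (g v) (g v) ≠ 0 := hu
    have hmem : ∀ w : V₁, w ∈ ocomp hd₁ v → G w ∈ ocomp hd₂ (g v) := by
      intro w hw
      rw [mem_ocomp_iff_bf hd₂ hσs hs0 h2]
      rw [mem_ocomp_iff_bf hd₁ hσs hs0 h2] at hw
      exact ⟨by rw [← hGv, hGbf]; exact hw.1, by rw [← hGsv, hGbf]; exact hw.2⟩
    have hmem' : ∀ w' : V₂, w' ∈ ocomp hd₂ (g v) → G.symm w' ∈ ocomp hd₁ v := by
      intro w' hw'
      rw [mem_ocomp_iff_bf hd₁ hσs hs0 h2]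
      rw [mem_ocomp_iff_bf hd₂ hσs hs0 h2] at hw'
      constructor
      · have hb := hGbf (G.symm w') v
        rw [G.apply_symm_apply, hGv] at hb
        rw [← hb]; exact hw'.1
      · have hb := hGbf (G.symm w') (s • v)
        rw [G.apply_symm_apply, hGsv] at hb
        rw [← hb]; exact hw'.2
    let g₀ : (ocomp hd₁ v) ≃ₗ[K] (ocomp hd₂ (g v)) :=
      { toFun := fun w => ⟨G ↑w, hmem ↑w w.2⟩,
        map_add' := fun w w' => Subtype.ext (by
          show G ↑(w + w') = G ↑w + G ↑w'
          rw [Submodule.coe_add, map_add]),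
        map_smul' := fun k w => Subtype.ext (by
          show G ↑(k • w) = k • (G ↑w : V₂)
          rw [Submodule.coe_smul_of_tower, map_smul]),
        invFun := fun w' => ⟨G.symm ↑w', hmem' ↑w' w'.2⟩,
        left_inv := fun w => Subtype.ext (G.symm_apply_apply ↑w),
        right_inv := fun w' => Subtype.ext (G.apply_symm_apply ↑w') }
    have hW1 : Module.finrank L (ocomp hd₁ v) = n := by
      have := finrank_ocomp hd₁ hv
      omega
    have hW2 : Module.finrank L (ocomp hd₂ (g v)) = n := by
      have := finrank_ocomp hd₂ hu
      omega
    obtain ⟨f₀, hf₀⟩ := IH (ocomp hd₁ v) (ocomp hd₂ (g v))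
      (fun a b => H₁ ↑a ↑b) (fun a b => H₂ ↑a ↑b)
      (hermData_ocomp hd₁ hv) (hermData_ocomp hd₂ hu) hW1 hW2 g₀
      (fun w => hGh ↑w)
    exact glue hd₁ hd₂ hv huu f₀ hf₀

omit [Module K V] [IsScalarTower K L V] in
theorem diag_basis {s : L} (hσs : σ s = -s) (hs0 : s ≠ 0) (h2 : (2 : L) ≠ 0) :
    ∀ (n : ℕ) (V₁ : Type) [AddCommGroup V₁] [Module L V₁] [FiniteDimensional L V₁]
      (H₁ : V₁ → V₁ → L) (_ : HermData σ H₁), Module.finrank L V₁ = n →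
      ∃ e : Module.Basis (Fin n) L V₁,
        (∀ i, H₁ (e i) (e i) ≠ 0) ∧ ∀ i j, i ≠ j → H₁ (e i) (e j) = 0 := by
  intro n
  induction n with
  | zero =>
    intro V₁ _ _ _ H₁ hd₁ h0
    have : Subsingleton V₁ := (Module.finrank_zero_iff (R := L)).mp h0
    exact ⟨Module.Basis.empty V₁, fun i => i.elim0, fun i => i.elim0⟩
  | succ n IH =>
    intro V₁ _ _ _ H₁ hd₁ h0
    have : Nontrivial V₁ := (Module.finrank_pos_iff (R := L)).mp (by rw [h0]; exact n.succ_pos)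
    obtain ⟨v, hv⟩ := exists_anisotropic hd₁ hσs hs0 h2
    have hv0 : v ≠ 0 := fun h => hv (by rw [h, hd₁.zerol])
    have hWn : Module.finrank L (ocomp hd₁ v) = n := by
      have := finrank_ocomp hd₁ hv
      omega
    obtain ⟨e₀, he₀d, he₀o⟩ := IH (ocomp hd₁ v) (fun a b => H₁ ↑a ↑b)
      (hermData_ocomp hd₁ hv) hWn
    let bspan : Module.Basis (Fin 1) L (L ∙ v) :=
      (Module.Basis.singleton (Fin 1) L).map (LinearEquiv.toSpanNonzeroSingleton L V₁ v hv0)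
    let B : Module.Basis (Fin 1 ⊕ Fin n) L V₁ :=
      (bspan.prod e₀).map (Submodule.prodEquivOfIsCompl _ _ (isCompl_ocomp hd₁ hv))
    have hBl : ∀ i : Fin 1, B (Sum.inl i) = v := by
      intro i
      have hb1 : ((bspan i : L ∙ v) : V₁) = v := by
        show ((((Module.Basis.singleton (Fin 1) L).map
          (LinearEquiv.toSpanNonzeroSingleton L V₁ v hv0)) i : L ∙ v) : V₁) = v
        rw [Module.Basis.map_apply, Module.Basis.singleton_apply, LinearEquiv.toSpanNonzeroSingleton_apply]
        exact one_smul L v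
      show Submodule.prodEquivOfIsCompl _ _ (isCompl_ocomp hd₁ hv)
        ((bspan.prod e₀) (Sum.inl i)) = v
      rw [Submodule.coe_prodEquivOfIsCompl', Module.Basis.prod_apply_inl_fst,
        Module.Basis.prod_apply_inl_snd, Submodule.coe_zero, add_zero]
      exact hb1
    have hBr : ∀ j : Fin n, B (Sum.inr j) = ↑(e₀ j) := by
      intro j
      show Submodule.prodEquivOfIsCompl _ _ (isCompl_ocomp hd₁ hv)
        ((bspan.prod e₀) (Sum.inr j)) = _
      rw [Submodule.coe_prodEquivOfIsCompl', Module.Basis.prod_apply_inr_fst,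
        Module.Basis.prod_apply_inr_snd, Submodule.coe_zero, zero_add]
    have auxd : ∀ a : Fin 1 ⊕ Fin n, H₁ (B a) (B a) ≠ 0 := by
      rintro (i | j)
      · rw [hBl]; exact hv
      · rw [hBr]; exact he₀d j
    have auxo : ∀ a b : Fin 1 ⊕ Fin n, a ≠ b → H₁ (B a) (B b) = 0 := by
      rintro (i | i) (j | j) hab
      · exact absurd (by rw [Subsingleton.elim i j]) hab
      · rw [hBl, hBr]
        rw [hd₁.herm]
        have : H₁ ↑(e₀ j) v = 0 := (e₀ j).2
        rw [this, map_zero]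
      · rw [hBl, hBr]
        exact (e₀ i).2
      · rw [hBr, hBr]
        exact he₀o i j (fun h => hab (by rw [h]))
    let eqv : (Fin 1 ⊕ Fin n) ≃ Fin (n + 1) :=
      finSumFinEquiv.trans (finCongr (Nat.add_comm 1 n))
    refine ⟨B.reindex eqv, fun i => ?_, fun i j hij => ?_⟩
    · rw [Module.Basis.reindex_apply]; exact auxd _
    · rw [Module.Basis.reindex_apply, Module.Basis.reindex_apply]
      exact auxo _ _ (fun h => hij (by
        have := congrArg eqv h
        simpa using this))

end Herm

open NumberField

/-- Transfer to the trace quadratic form: Hermitian spaces over `L/K` are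
isometric iff the associated quadratic `K`-spaces `(V_K, Q_H)` are isometric, and for
`L = K(√δ)` the discriminant of `Q_H` is the square class of `δ^n`. -/
theorem hermitian_to_quadratic_transfer
    {K L : Type} [Field K] [NumberField K] [Field L] [NumberField L] [Algebra K L]
    (htr : ∀ v : InfinitePlace K, v.IsReal)
    (hti : ∀ v : InfinitePlace L, v.IsComplex)
    (hquad : Module.finrank K L = 2)
    (σ : L ≃ₐ[K] L) (hσne : σ ≠ AlgEquiv.refl)
    (hfix : ∀ x : L, σ x = x → ∃ k : K, algebraMap K L k = x)
    {V V' : Type} [AddCommGroup V] [Module L V] [FiniteDimensional L V]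
    [AddCommGroup V'] [Module L V'] [FiniteDimensional L V']
    [Module K V] [IsScalarTower K L V] [Module K V'] [IsScalarTower K L V']
    (n : ℕ) (hn : Module.finrank L V = n) (hn' : Module.finrank L V' = n)
    (H : V → V → L) (H' : V' → V' → L)
    -- H is a nondegenerate σ-Hermitian form on V
    (haddl : ∀ v v' w : V, H (v + v') w = H v w + H v' w)
    (haddr : ∀ v w w' : V, H v (w + w') = H v w + H v w')
    (hsmul : ∀ (a : L) (v w : V), H (a • v) w = a * H v w)
    (hherm : ∀ v w : V, H v w = σ (H w v))
    (hnd : ∀ v : V, (∀ w : V, H v w = 0) → v = 0)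
    -- H' is a nondegenerate σ-Hermitian form on V'
    (haddl' : ∀ v v' w : V', H' (v + v') w = H' v w + H' v' w)
    (haddr' : ∀ v w w' : V', H' v (w + w') = H' v w + H' v w')
    (hsmul' : ∀ (a : L) (v w : V'), H' (a • v) w = a * H' v w)
    (hherm' : ∀ v w : V', H' v w = σ (H' w v))
    (hnd' : ∀ v : V', (∀ w : V', H' v w = 0) → v = 0)
    -- Q_H and Q_{H'} : the quadratic forms v ↦ H(v,v) with values in K
    (Q : V → K) (hQ : ∀ v : V, algebraMap K L (Q v) = H v v)
    (Q' : V' → K) (hQ' : ∀ v : V', algebraMap K L (Q' v) = H' v v)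
    -- L = K(√δ)
    (δ : K) (hδ : δ ≠ 0) (s : L) (hs : s ^ 2 = algebraMap K L δ)
    (hLgen : ∀ x : L, ∃ a b : K, x = algebraMap K L a + algebraMap K L b * s) :
    -- (1) Hermitian isometry of (V,H),(V',H') ↔ quadratic isometry of (V_K,Q_H),(V'_K,Q_{H'})
    ((∃ f : V ≃ₗ[L] V', ∀ v w : V, H' (f v) (f w) = H v w) ↔
      (∃ g : V ≃ₗ[K] V', ∀ v : V, Q' (g v) = Q v)) ∧
    -- (2) disc(Q_H) = δ^n modulo squares
    (∀ b : Module.Basis (Fin (2 * n)) K V,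
      ∃ c : K, c ≠ 0 ∧
        (-1 : K) ^ n *
          (Matrix.of fun i j => (Q (b i + b j) - Q (b i) - Q (b j)) / 2).det =
          δ ^ n * c ^ 2) := by
  classical
  have hinj := (algebraMap K L).injective
  have h2L : (2 : L) ≠ 0 := two_ne_zero
  have hd : HermData σ H := ⟨haddl, hsmul, hherm, hnd⟩
  have hd' : HermData σ H' := ⟨haddl', hsmul', hherm', hnd'⟩
  have hs0 : s ≠ 0 := by
    intro h
    apply hδ
    apply hinj
    rw [map_zero, ← hs, h]
    norm_num
  have hσs : σ s = -s := by
    have h1 : (σ s) ^ 2 = s ^ 2 := by rw [← map_pow, hs, AlgEquiv.commutes]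
    have h2 : (σ s - s) * (σ s + s) = 0 := by linear_combination h1
    rcases mul_eq_zero.mp h2 with h | h
    · exfalso
      have hss : σ s = s := sub_eq_zero.mp h
      apply hσne
      apply AlgEquiv.ext
      intro x
      obtain ⟨a, bb, hx⟩ := hLgen x
      have : σ x = x := by
        rw [hx, map_add, map_mul, AlgEquiv.commutes, AlgEquiv.commutes, hss]
      simpa using this
    · exact eq_neg_of_add_eq_zero_left h
  constructor
  · -- part (1)
    constructor
    · rintro ⟨f, hf⟩
      refine ⟨f.restrictScalars K, fun v => hinj ?_⟩
      rw [hQ', hQ]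
      exact hf v v
    · rintro ⟨g, hg⟩
      have hgh : ∀ x : V, H' (g x) (g x) = H x x := by
        intro x
        rw [← hQ', hg, hQ]
      exact jacobson (σ := σ) hσs hs0 h2L n V V' H H' hd hd' hn hn' g hgh
  · -- part (2)
    intro b
    obtain ⟨e, hed, heo⟩ := diag_basis (σ := σ) hσs hs0 h2L n V H hd hn
    have hfixe : ∀ i, σ (H (e i) (e i)) = H (e i) (e i) := fun i => hd.diag_fixed _
    choose α hα using fun i => hfix _ (hfixe i)
    have hα0 : ∀ i, α i ≠ 0 := fun i h => hed i (by rw [← hα i, h, map_zero])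
    -- the K-basis (1, s) of L
    have hli : LinearIndependent K ![1, s] := by
      rw [linearIndependent_fin2]
      constructor
      · simpa using hs0
      · intro a ha
        simp only [Matrix.cons_val_one, Matrix.head_cons, Matrix.cons_val_zero] at ha
        have h1 : algebraMap K L a * s = 1 := by rwa [Algebra.smul_def] at ha
        have hss : σ s = s := by
          have hval : s = (algebraMap K L a)⁻¹ :=
            eq_inv_of_mul_eq_one_right h1
          rw [hval, map_inv₀, AlgEquiv.commutes]
        rw [hσs] at hss
        have h2s : (2 : L) * s = 0 := by linear_combination - hss
        rcases mul_eq_zero.mp h2s with h | h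
        · exact h2L h
        · exact hs0 h
    have hcard : Fintype.card (Fin 2) = Module.finrank K L := by
      rw [Fintype.card_fin, hquad]
    obtain ⟨bKL, hbKL⟩ : ∃ bb : Module.Basis (Fin 2) K L, ⇑bb = ![1, s] :=
      ⟨basisOfLinearIndependentOfCardEqFinrank hli hcard,
        coe_basisOfLinearIndependentOfCardEqFinrank hli hcard⟩
    -- the bilinear form over K
    have hBfun : ∀ x y : V,
        algebraMap K L ((Q (x + y) - Q x - Q y) / 2) = (H x y + H y x) / 2 := by
      intro x y
      rw [map_div₀, map_sub, map_sub, hQ, hQ, hQ, map_ofNat, hd.addl, hd.addr, hd.addr]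
      ring
    let BL : V →ₗ[K] V →ₗ[K] K := LinearMap.mk₂ K
      (fun x y => (Q (x + y) - Q x - Q y) / 2)
      (by
        intro m₁ m₂ m₃
        apply hinj
        rw [map_add, hBfun, hBfun, hBfun, hd.addl, hd.addr]
        ring)
      (by
        intro c m₁ m₂
        rw [smul_eq_mul]
        apply hinj
        rw [map_mul, hBfun, hBfun, hd.ksmull, hd.ksmulr]
        ring)
      (by
        intro m₁ m₂ m₃
        apply hinj
        rw [map_add, hBfun, hBfun, hBfun, hd.addl, hd.addr]
        ring)
      (by
        intro c m₁ m₂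
        rw [smul_eq_mul]
        apply hinj
        rw [map_mul, hBfun, hBfun, hd.ksmull, hd.ksmulr]
        ring)
    have hBL : ∀ x y : V, algebraMap K L (BL x y) = (H x y + H y x) / 2 := hBfun
    -- the K-basis e_j, s•e_j of V
    let E₀ : Module.Basis (Fin 2 × Fin n) K V := bKL.smulTower e
    let dfun : Fin 2 × Fin n → K := fun p => if p.1 = 0 then α p.2 else -(δ * α p.2)
    have hcross : ∀ (c c' : L) (j l : Fin n),
        H (c • e j) (c' • e l) + H (c' • e l) (c • e j) =
          c * σ c' * H (e j) (e l) + c' * σ c * H (e l) (e j) := by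
      intro c c' j l
      rw [hd.smull, hd.smulr, hd.smull, hd.smulr]
      ring
    have hmain : ∀ (i k : Fin 2) (j l : Fin n),
        BL (E₀ (i, j)) (E₀ (k, l)) =
          if (i, j) = (k, l) then dfun (i, j) else 0 := by
      intro i k j l
      apply hinj
      have hE₀ : ∀ (i : Fin 2) (j : Fin n), E₀ (i, j) = bKL i • e j := fun i j =>
        Module.Basis.smulTower_apply _ _ _
      rw [hE₀, hE₀]
      rw [show BL (bKL i • e j) (bKL k • e l) =
        (Q (bKL i • e j + bKL k • e l) - Q (bKL i • e j) - Q (bKL k • e l)) / 2 from rfl]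
      rw [hBfun, hcross]
      by_cases hjl : j = l
      · subst hjl
        have hb0 : bKL 0 = 1 := by rw [hbKL]; rfl
        have hb1 : bKL 1 = s := by rw [hbKL]; rfl
        have hft : ∀ m : Fin 2, m = 0 ∨ m = 1 := by decide
        have hdf0 : dfun (0, j) = α j := by
          show (if (0 : Fin 2) = 0 then α j else -(δ * α j)) = α j
          rw [if_pos rfl]
        have hdf1 : dfun (1, j) = -(δ * α j) := by
          show (if (1 : Fin 2) = 0 then α j else -(δ * α j)) = -(δ * α j)
          rw [if_neg (by decide)]
        rcases hft i with rfl | rfl <;> rcases hft k with rfl | rfl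
        · rw [hb0, map_one, if_pos rfl, hdf0, hα, div_eq_iff h2L]
          ring
        · rw [hb0, hb1, map_one, hσs, if_neg (by simp)]
          have hz : 1 * -s * H (e j) (e j) + s * 1 * H (e j) (e j) = 0 := by ring
          rw [hz, zero_div, map_zero]
        · rw [hb0, hb1, map_one, hσs, if_neg (by simp)]
          have hz : s * 1 * H (e j) (e j) + 1 * -s * H (e j) (e j) = 0 := by ring
          rw [hz, zero_div, map_zero]
        · rw [hb1, hσs, if_pos rfl, hdf1, map_neg, map_mul, hα, div_eq_iff h2L, ← hs]
          ring
      · rw [heo j l hjl, heo l j (Ne.symm hjl), if_neg (by simp [hjl]), map_zero]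
        ring
    have hD0 : LinearMap.toMatrix₂ E₀ E₀ BL = Matrix.diagonal dfun := by
      ext ⟨i, j⟩ ⟨k, l⟩
      rw [LinearMap.toMatrix₂_apply, Matrix.diagonal_apply, hmain]
    let E : Module.Basis (Fin (2 * n)) K V := E₀.reindex finProdFinEquiv
    have hsub : LinearMap.toMatrix₂ E E BL =
        (LinearMap.toMatrix₂ E₀ E₀ BL).submatrix finProdFinEquiv.symm finProdFinEquiv.symm := by
      ext i j
      rw [LinearMap.toMatrix₂_apply, Matrix.submatrix_apply, LinearMap.toMatrix₂_apply,
        Module.Basis.reindex_apply, Module.Basis.reindex_apply]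
    have hdetD : (Matrix.diagonal dfun).det = (-δ) ^ n * (∏ j, α j) ^ 2 := by
      rw [Matrix.det_diagonal, Fintype.prod_prod_type, Fin.prod_univ_two]
      have hd0 : ∀ j : Fin n, dfun (0, j) = α j := fun j => if_pos rfl
      have hd1 : ∀ j : Fin n, dfun (1, j) = (-δ) * α j := fun j => by
        rw [show dfun (1, j) = -(δ * α j) from if_neg (by simp)]; ring
      simp only [hd0, hd1]
      rw [Finset.prod_mul_distrib, Finset.prod_const, Finset.card_univ, Fintype.card_fin]
      ring
    have hdetE : (LinearMap.toMatrix₂ E E BL).det = (-δ) ^ n * (∏ j, α j) ^ 2 := by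
      rw [hsub, Matrix.det_submatrix_equiv_self, hD0, hdetD]
    have hM : (Matrix.of fun i j => (Q (b i + b j) - Q (b i) - Q (b j)) / 2) =
        LinearMap.toMatrix₂ b b BL := by
      ext i j
      rw [LinearMap.toMatrix₂_apply]
      rfl
    letI : Invertible (E.toMatrix ⇑b) := E.invertibleToMatrix b
    have hPdet : (E.toMatrix ⇑b).det ≠ 0 :=
      IsUnit.ne_zero (Matrix.isUnit_det_of_invertible _)
    have hdetM : (Matrix.of fun i j => (Q (b i + b j) - Q (b i) - Q (b j)) / 2).det =
        (-δ) ^ n * (∏ j, α j) ^ 2 * (E.toMatrix ⇑b).det ^ 2 := by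
      rw [hM, ← LinearMap.toMatrix₂_mul_basis_toMatrix E E b b BL, Matrix.det_mul,
        Matrix.det_mul, Matrix.det_transpose, hdetE]
      ring
    refine ⟨(∏ j, α j) * (E.toMatrix ⇑b).det,
      mul_ne_zero (Finset.prod_ne_zero_iff.mpr fun j _ => hα0 j) hPdet, ?_⟩
    rw [hdetM]
    have hpow : (-1 : K) ^ n * (-δ) ^ n = δ ^ n := by
      rw [← mul_pow, neg_one_mul, neg_neg]
    calc (-1 : K) ^ n * ((-δ) ^ n * (∏ j, α j) ^ 2 * (E.toMatrix ⇑b).det ^ 2)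
        = ((-1 : K) ^ n * (-δ) ^ n) * ((∏ j, α j) * (E.toMatrix ⇑b).det) ^ 2 := by ring
      _ = δ ^ n * ((∏ j, α j) * (E.toMatrix ⇑b).det) ^ 2 := by rw [hpow]
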